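/- If the cyclic permutation σ(i) = i mod N + 1 is an automorphism of the side information graph G, and κ_q is the minrank of G over F_q, then β_G*( κ_q(N − κ_q + 1)/N ) ≤ κ_q. -/

import Mathlib

open Finset

/-- A unicast index coding problem on `N` receivers: receiver `i` demands message `i`
and knows messages indexed by `K i` as side information, with `i ∉ K i`. -/
structure IndexProblem (N : ℕ) where
  K : Fin N → Finset (Fin N)
  not_self : ∀ i, i ∉ K i

/-- A valid index code over alphabet `A` with message length `m` and codeword length `ℓ`:
an encoder together with query sets `R i`, such that receiver `i` can decode `x i`
exactly from the queried codeword symbols `c_{R i}` and its side information. -/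
structure IndexCode (N : ℕ) (G : IndexProblem N) (A : Type*) (m ℓ : ℕ) where
  enc : (Fin N → Fin m → A) → Fin ℓ → A
  R : Fin N → Finset (Fin ℓ)
  valid : ∀ (i : Fin N) (x y : Fin N → Fin m → A),
    (∀ t ∈ R i, enc x t = enc y t) → (∀ j ∈ G.K i, x j = y j) → x i = y i

/-- The optimal broadcast rate function `β_G^*(r)`: the infimum of broadcast rates `ℓ/m`
over all message lengths `m ≥ 1` and valid index codes with locality at most `r`. -/
noncomputable def betaStar (A : Type*) {N : ℕ} (G : IndexProblem N) (r : ℝ) : ℝ :=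
  sInf {β : ℝ | ∃ (m ℓ : ℕ) (_ : 0 < m) (C : IndexCode N G A m ℓ),
    (∀ i, ((C.R i).card : ℝ) ≤ r * m) ∧ β = (ℓ : ℝ) / m}

/-- A matrix `A` fits the side information graph `G` if its diagonal entries are `1`
and `A j i = 0` for all `i ≠ j` with `j ∉ K i`. -/
def Fits {N : ℕ} {F : Type*} [Field F] (G : IndexProblem N)
    (A : Matrix (Fin N) (Fin N) F) : Prop :=
  (∀ i, A i i = 1) ∧ ∀ i j, j ≠ i → j ∉ G.K i → A j i = 0

/-- `B` is a valid scalar linear encoding matrix for `G`: every receiver `i` can recover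
`x i` from the codeword `c = x B` and its side information `(x j, j ∈ K i)`. -/
def IsValidEncMatrix {N ℓ : ℕ} {F : Type*} [Field F] (G : IndexProblem N)
    (B : Matrix (Fin N) (Fin ℓ) F) : Prop :=
  ∀ (i : Fin N) (x y : Fin N → F),
    Matrix.vecMul x B = Matrix.vecMul y B → (∀ j ∈ G.K i, x j = y j) → x i = y i

/-- The column space of a matrix, i.e. the span of its columns. -/
def colSpace {n ℓ : ℕ} {F : Type*} [Field F] (B : Matrix (Fin n) (Fin ℓ) F) :
    Submodule F (Fin n → F) :=
  Submodule.span F (Set.range B.transpose)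

open Classical

/-- The minrank of `G` over `F`: the minimum rank among matrices fitting `G`. -/
noncomputable def minrank {N : ℕ} (F : Type*) [Field F] (G : IndexProblem N) : ℕ :=
  sInf {r : ℕ | ∃ A : Matrix (Fin N) (Fin N) F, Fits G A ∧ A.rank = r}


section AuxLocality

variable {N : ℕ} {F : Type*} [Field F]

open Fin.NatCast Fin.CommRing in
private lemma shift_mem_aux [NeZero N] (G : IndexProblem N)
    (hAut : ∀ i j : Fin N, j ∈ G.K i ↔ j + 1 ∈ G.K (i + 1)) :
    ∀ (s i j : Fin N), j ∈ G.K i ↔ j + s ∈ G.K (i + s) := by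
  have key : ∀ (n : ℕ) (i j : Fin N), j ∈ G.K i ↔ j + (n : Fin N) ∈ G.K (i + (n : Fin N)) := by
    intro n
    induction n with
    | zero => intro i j; simp
    | succ n ih =>
        intro i j
        have h1 : j + ((n + 1 : ℕ) : Fin N) = (j + (n : Fin N)) + 1 := by push_cast; ring
        have h2 : i + ((n + 1 : ℕ) : Fin N) = (i + (n : Fin N)) + 1 := by push_cast; ring
        rw [h1, h2, ← hAut, ← ih]
  intro s i j
  simpa [Fin.cast_val_eq_self] using key s.val i j

private lemma decode_core_aux (G : IndexProblem N) (A : Matrix (Fin N) (Fin N) F)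
    (hA : Fits G A) (c0 : Fin N) (d : Fin N → F) (hside : ∀ k ∈ G.K c0, d k = 0)
    (hdot : (∑ k, d k * A k c0) = 0) : d c0 = 0 := by
  classical
  have h : (∑ k, d k * A k c0) = d c0 * A c0 c0 := by
    apply Finset.sum_eq_single c0
    · intro b _ hb
      by_cases hbk : b ∈ G.K c0
      · simp [hside b hbk]
      · simp [hA.2 c0 b hb hbk]
    · intro h; exact absurd (Finset.mem_univ c0) h
  rw [h, hA.1 c0, mul_one] at hdot
  exact hdot

private lemma dot_zero_of_span_aux (d : Fin N → F) (T : Set (Fin N → F))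
    (hT : ∀ w ∈ T, (∑ k, d k * w k) = 0) (v : Fin N → F)
    (hv : v ∈ Submodule.span F T) : (∑ k, d k * v k) = 0 := by
  classical
  let φ : (Fin N → F) →ₗ[F] F :=
    { toFun := fun w => ∑ k, d k * w k
      map_add' := by
        intro w u
        simp [mul_add, Finset.sum_add_distrib]
      map_smul' := by
        intro c w
        simp [Finset.mul_sum, Pi.smul_apply, smul_eq_mul]
        congr 1; funext k; ring }
  have hker : Submodule.span F T ≤ LinearMap.ker φ := by
    rw [Submodule.span_le]
    intro w hw
    exact hT w hw
  exact hker hv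

private theorem exists_code_aux [NeZero N] (G : IndexProblem N)
    (hAut : ∀ i j : Fin N, j ∈ G.K i ↔ j + 1 ∈ G.K (i + 1))
    (A : Matrix (Fin N) (Fin N) F) (hA : Fits G A) (κ : ℕ) (hκ : A.rank = κ) :
    ∃ C : IndexCode N G F N (N * κ), ∀ i, (C.R i).card = κ + (N - κ) * κ := by
  classical
  -- choose a set S of κ column indices whose columns span the column space
  obtain ⟨t, hts, htspan, htind⟩ := exists_linearIndependent F (Set.range A.transpose)
  haveI : Fintype t := (Set.Finite.subset (Set.finite_range _) hts).fintype
  have hcard : t.toFinset.card = κ := by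
    have h1 := finrank_span_set_eq_card (s := t) htind
    rw [htspan] at h1
    rw [← h1, ← hκ, Matrix.rank_eq_finrank_span_cols]; rfl
  choose f hf using fun v : t => hts v.2
  have hfinj : Function.Injective f := by
    intro u v h
    apply Subtype.ext
    rw [← hf u, ← hf v, h]
  set S : Finset (Fin N) := Finset.univ.image f with hSdef
  have hScard : S.card = κ := by
    rw [hSdef, Finset.card_image_of_injective _ hfinj, Finset.card_univ,
      ← Set.toFinset_card, hcard]
  have hSim : A.transpose '' ↑S = t := by
    ext v
    constructor
    · rintro ⟨j, hj, rfl⟩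
      rw [Finset.mem_coe, hSdef, Finset.mem_image] at hj
      obtain ⟨u, _, rfl⟩ := hj
      rw [hf u]; exact u.2
    · intro hv
      exact ⟨f ⟨v, hv⟩, by simp [hSdef], hf ⟨v, hv⟩⟩
  have hcol : ∀ c0 : Fin N, A.transpose c0 ∈ Submodule.span F (A.transpose '' ↑S) := by
    intro c0
    rw [hSim, htspan]
    exact Submodule.subset_span (Set.mem_range_self c0)
  -- enumerate S
  let e2 : Fin κ ≃ {x // x ∈ S} := ((S.equivFin).trans (finCongr hScard)).symm
  let col : Fin κ → Fin N := fun p => (e2 p : Fin N)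
  let ep : Fin N × Fin κ ≃ Fin (N * κ) := finProdFinEquiv
  let blockSet : Fin N → Fin N → Finset (Fin κ) := fun i s =>
    if h : (i - s) ∈ S then {e2.symm ⟨i - s, h⟩} else Finset.univ
  let R' : Fin N → Finset (Fin N × Fin κ) := fun i =>
    Finset.univ.biUnion fun s => (blockSet i s).image (Prod.mk s)
  have memR' : ∀ (i s : Fin N) (p : Fin κ), (s, p) ∈ R' i ↔ p ∈ blockSet i s := by
    intro i s p
    simp only [R', Finset.mem_biUnion, Finset.mem_image, Finset.mem_univ, true_and,
      Prod.mk.injEq]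
    constructor
    · rintro ⟨s', q, hq, rfl, rfl⟩; exact hq
    · intro hp; exact ⟨s, p, hp, rfl, rfl⟩
  refine ⟨⟨fun x c => ∑ k, x (k + (ep.symm c).1) (ep.symm c).1 * A k (col (ep.symm c).2),
      fun i => (R' i).image ep, ?_⟩, ?_⟩
  · -- validity
    intro i x y henc hside
    funext s
    set d : Fin N → F := fun k => x (k + s) s - y (k + s) s with hd
    have hquery : ∀ p : Fin κ, (s, p) ∈ R' i → (∑ k, d k * A k (col p)) = 0 := by
      intro p hp
      have h1 := henc (ep (s, p)) (Finset.mem_image_of_mem _ hp)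
      simp only [Equiv.symm_apply_apply] at h1
      have : (∑ k, d k * A k (col p)) =
          (∑ k, x (k + s) s * A k (col p)) - (∑ k, y (k + s) s * A k (col p)) := by
        rw [← Finset.sum_sub_distrib]
        congr 1; funext k; rw [hd]; ring
      rw [this, h1, sub_self]
    have hsided : ∀ k ∈ G.K (i - s), d k = 0 := by
      intro k hk
      have hks : k + s ∈ G.K i := by
        have := (shift_mem_aux G hAut s (i - s) k).mp hk
        rwa [sub_add_cancel] at this
      rw [hd]
      simp [hside _ hks]
    have hdz : d (i - s) = 0 := by
      apply decode_core_aux G A hA (i - s) d hsided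
      by_cases hmem : (i - s) ∈ S
      · have hp : (s, e2.symm ⟨i - s, hmem⟩) ∈ R' i := by
          rw [memR']
          simp [blockSet, hmem]
        have h2 := hquery _ hp
        have h3 : col (e2.symm ⟨i - s, hmem⟩) = i - s := by
          simp [col, Equiv.apply_symm_apply]
        rwa [h3] at h2
      · have hq : ∀ w ∈ A.transpose '' ↑S, (∑ k, d k * w k) = 0 := by
          rintro w ⟨j, hj, rfl⟩
          rw [Finset.mem_coe] at hj
          have hp : (s, e2.symm ⟨j, hj⟩) ∈ R' i := by
            rw [memR']
            simp [blockSet, hmem]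
          have h2 := hquery _ hp
          have h3 : col (e2.symm ⟨j, hj⟩) = j := by
            simp [col, Equiv.apply_symm_apply]
          rw [h3] at h2
          simpa [Matrix.transpose_apply] using h2
        have h4 := dot_zero_of_span_aux d _ hq _ (hcol (i - s))
        simpa [Matrix.transpose_apply] using h4
    have hxy : x ((i - s) + s) s - y ((i - s) + s) s = 0 := hdz
    rwa [sub_add_cancel, sub_eq_zero] at hxy
  · -- cardinality
    intro i
    rw [Finset.card_image_of_injective _ ep.injective]
    have hdisj : ∀ a ∈ (Finset.univ : Finset (Fin N)), ∀ b ∈ (Finset.univ : Finset (Fin N)),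
        a ≠ b → Disjoint ((blockSet i a).image (Prod.mk a)) ((blockSet i b).image (Prod.mk b)) := by
      intro a _ b _ hab
      rw [Finset.disjoint_left]
      rintro ⟨s', p⟩ hsa hsb
      rw [Finset.mem_image] at hsa hsb
      obtain ⟨q1, _, hq1⟩ := hsa
      obtain ⟨q2, _, hq2⟩ := hsb
      have h1 : a = s' := congrArg Prod.fst hq1
      have h2 : b = s' := congrArg Prod.fst hq2
      exact hab (h1.trans h2.symm)
    rw [Finset.card_biUnion hdisj]
    have hbc : ∀ s : Fin N, ((blockSet i s).image (Prod.mk s)).card =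
        if (i - s) ∈ S then 1 else κ := by
      intro s
      rw [Finset.card_image_of_injective _ (fun q1 q2 h => (Prod.ext_iff.mp h).2)]
      by_cases h : (i - s) ∈ S
      · simp [blockSet, h]
      · simp [blockSet, h]
    rw [Finset.sum_congr rfl (fun s _ => hbc s), Finset.sum_ite]
    have hfc : (Finset.univ.filter (fun s : Fin N => i - s ∈ S)).card = κ := by
      rw [← hScard]
      apply Finset.card_bij (fun s _ => i - s)
      · intro a ha; exact (Finset.mem_filter.mp ha).2
      · intro a _ b _ h
        have : i - (i - a) = i - (i - b) := by rw [h]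
        rwa [sub_sub_cancel, sub_sub_cancel] at this
      · intro j hj
        exact ⟨i - j, Finset.mem_filter.mpr ⟨Finset.mem_univ _, by rwa [sub_sub_cancel]⟩,
          sub_sub_cancel i j⟩
    have hfc' : (Finset.univ.filter (fun s : Fin N => ¬ (i - s ∈ S))).card = N - κ := by
      have := Finset.card_filter_add_card_filter_not
        (s := (Finset.univ : Finset (Fin N))) (fun s : Fin N => i - s ∈ S)
      rw [hfc, Finset.card_univ, Fintype.card_fin] at this
      omega
    rw [Finset.sum_const, Finset.sum_const, hfc, hfc', smul_eq_mul, smul_eq_mul, mul_one]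

end AuxLocality

/-- if the cyclic shift `σ(i) = i mod N + 1` is an automorphism of `G` and
`κ_q` is the minrank of `G` over `F_q`, then `β_G^*( κ_q (N − κ_q + 1) / N ) ≤ κ_q`. -/
theorem cyclic_symmetry_locality (N : ℕ) (hN : 0 < N) (G : IndexProblem N)
    (F : Type*) [Field F] [Fintype F]
    (hAut : ∀ i j : Fin N,
      j ∈ G.K i ↔ (⟨(j.val + 1) % N, Nat.mod_lt _ hN⟩ : Fin N) ∈
        G.K ⟨(i.val + 1) % N, Nat.mod_lt _ hN⟩) :
    betaStar F G (((minrank F G : ℝ) * ((N : ℝ) - (minrank F G : ℝ) + 1)) / N)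
      ≤ (minrank F G : ℝ) := by
  haveI : NeZero N := ⟨hN.ne'⟩
  set κ := minrank F G with hκdef
  have hne : {r : ℕ | ∃ A : Matrix (Fin N) (Fin N) F, Fits G A ∧ A.rank = r}.Nonempty := by
    refine ⟨Fintype.card (Fin N), 1, ⟨fun i => by simp [Matrix.one_apply], ?_⟩, Matrix.rank_one⟩
    intro i j hji _
    simp [Matrix.one_apply, hji]
  obtain ⟨A, hA, hAr⟩ := Nat.sInf_mem hne
  have hAκ : A.rank = κ := hAr
  have hκN : κ ≤ N := by
    rw [← hAκ]
    simpa using Matrix.rank_le_card_width A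
  have hAut' : ∀ i j : Fin N, j ∈ G.K i ↔ j + 1 ∈ G.K (i + 1) := by
    intro i j
    have key : ∀ j : Fin N, (⟨(j.val + 1) % N, Nat.mod_lt _ hN⟩ : Fin N) = j + 1 := by
      intro j
      apply Fin.ext
      simp [Fin.add_def, Fin.val_one', Nat.mod_mod]
    rw [← key i, ← key j]
    exact hAut i j
  obtain ⟨C, hC⟩ := exists_code_aux G hAut' A hA κ hAκ
  apply csInf_le
  · refine ⟨0, ?_⟩
    rintro β ⟨m, ℓ, hm, C', h1, rfl⟩
    positivity
  · refine ⟨N, N * κ, hN, C, ?_, ?_⟩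
    · intro i
      rw [hC i]
      have hNne : (N : ℝ) ≠ 0 := Nat.cast_ne_zero.mpr hN.ne'
      rw [div_mul_cancel₀ _ hNne]
      have : ((κ + (N - κ) * κ : ℕ) : ℝ) = (κ : ℝ) * ((N : ℝ) - (κ : ℝ) + 1) := by
        push_cast [hκN]
        ring
      rw [this]
    · have hNne : (N : ℝ) ≠ 0 := Nat.cast_ne_zero.mpr hN.ne'
      push_cast
      rw [mul_comm, mul_div_assoc, div_self hNne, mul_one]
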